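/- arXiv:math/9804067 — 2 statements merged into one kernel-verified Lean document; each statement's English description precedes it below -/
import Mathlib

section
/- Let ‖·‖_m and ‖·‖_{m+1} be the norms ‖·‖_{V,m} and ‖·‖_{V,m+1} on c00. Suppose (y_i) is a block sequence with ‖y_i‖_{V,m} = 1 for all i and ‖Σ_{i∈F} y_i‖_{V,m} ≤ 2 for all finite F (i.e. (y_i) is 2-equivalent to the c0 basis in ‖·‖_{V,m} from above). Then for every n, choosing k with n ≤ min supp y_{k+1}, one has ‖Σ_{i=k+1}^{k+n} y_i‖_{V,m+1} ≥ θ_1·n while ‖Σ_{i=k+1}^{k+n} y_i‖_{V,m} ≤ 2. Hence ‖·‖_{V,m} and ‖·‖_{V,m+1} are not equivalent on the span of (y_i). -/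
/-- The Schreier classes `S_n` of finite subsets of `ℕ`:
`S_0` consists of singletons and the empty set, and `F ∈ S_{n+1}` iff
`F = F_1 ∪ ⋯ ∪ F_k` where `k ≤ F_1 < F_2 < ⋯ < F_k` and each `F_i ∈ S_n`
(the empty set is allowed in every class). -/
inductive Schreier : ℕ → Finset ℕ → Prop
  | empty (n : ℕ) : Schreier n ∅
  | singleton (m : ℕ) : Schreier 0 {m}
  | union (n : ℕ) (L : List (Finset ℕ))
      (hmem : ∀ F ∈ L, Schreier n F)
      (hchain : L.Chain' (fun E F => ∀ a ∈ E, ∀ b ∈ F, a < b))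
      (hlen : ∀ F ∈ L, ∀ a ∈ F, L.length ≤ a) :
      Schreier (n + 1) (L.foldr (· ∪ ·) ∅)

/-- A family of finitely supported vectors is `S_k`-allowable: the supports are
nonempty and pairwise disjoint, and the set of minima of the supports is in `S_k`. -/
def Allowable (k : ℕ) {r : ℕ} (x : Fin r → (ℕ →₀ ℝ)) : Prop :=
  (∀ i, (x i).support.Nonempty) ∧
  (∀ i j, i ≠ j → Disjoint (x i).support (x j).support) ∧
  Schreier k (Finset.image (fun i => ((x i).support.min.getD 0)) Finset.univ)

/-- A family of finite sets is `S_k`-allowable: nonempty, pairwise disjoint,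
with the set of minima in `S_k`. -/
def AllowableSets (k : ℕ) {r : ℕ} (E : Fin r → Finset ℕ) : Prop :=
  (∀ i, (E i).Nonempty) ∧
  (∀ i j, i ≠ j → Disjoint (E i) (E j)) ∧
  Schreier k (Finset.image (fun i => ((E i).min.getD 0)) Finset.univ)

/-- `N` is the sequence of norms `‖·‖_{V,m}` on `c₀₀`:
`N 0 x = ‖x‖_∞` and `N (m+1) x` is the supremum of `‖x‖_∞` together with all
`θ_k · Σ_i ‖E_i x‖_{V,m}` over `k ≥ 1` and `S_k`-allowable families `(E_i)`. -/
def VNormRec (θ : ℕ → ℝ) (N : ℕ → (ℕ →₀ ℝ) → ℝ) : Prop :=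
  (∀ x : ℕ →₀ ℝ, N 0 x = ⨆ j, |x j|) ∧
  (∀ (m : ℕ) (x : ℕ →₀ ℝ),
    IsLUB ({⨆ j, |x j|} ∪
      {y : ℝ | ∃ k, 1 ≤ k ∧ ∃ r, ∃ E : Fin r → Finset ℕ, AllowableSets k E ∧
        y = θ k * ∑ i, N m (x.filter (· ∈ E i))})
      (N (m + 1) x))

lemma foldr_map_singleton (l : List ℕ) :
    (l.map (fun a => ({a} : Finset ℕ))).foldr (· ∪ ·) ∅ = l.toFinset := by
  induction l with
  | nil => simp
  | cons a l ih => simp [ih]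

lemma schreier_one (F : Finset ℕ) (h : ∀ a ∈ F, F.card ≤ a) : Schreier 1 F := by
  have key := Schreier.union 0 ((F.sort (· ≤ ·)).map (fun a => ({a} : Finset ℕ)))
    ?_ ?_ ?_
  · rwa [foldr_map_singleton, Finset.sort_toFinset] at key
  · intro G hG
    simp only [List.mem_map] at hG
    obtain ⟨a, -, rfl⟩ := hG
    exact Schreier.singleton a
  · rw [show @List.Chain' (Finset ℕ) = List.IsChain from rfl, List.isChain_map]
    have hs : (F.sort (· ≤ ·)).Pairwise (· < ·) := (Finset.sortedLT_sort F).pairwise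
    refine List.IsChain.imp ?_ ((List.isChain_iff_pairwise).mpr hs)
    intro a b hab x hx y hy
    simp only [Finset.mem_singleton] at hx hy
    omega
  · intro G hG a ha
    simp only [List.mem_map] at hG
    obtain ⟨b, hb, rfl⟩ := hG
    simp only [Finset.mem_singleton] at ha
    subst ha
    rw [List.length_map, Finset.length_sort]
    exact h a (by rwa [← Finset.mem_sort (α := ℕ) (· ≤ ·)])

/-- Consecutive norms `‖·‖_{V,m}` and `‖·‖_{V,m+1}` are not equivalent on the
span of a normalized block sequence that is dominated by the `c₀` basis. -/
theorem VNorm_succ_not_equivalent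
    (θ : ℕ → ℝ) (hθ : ∀ n, θ n ∈ Set.Ioo (0:ℝ) 1)
    (hθ0 : Filter.Tendsto θ Filter.atTop (nhds 0))
    (N : ℕ → (ℕ →₀ ℝ) → ℝ) (hrec : VNormRec θ N)
    (m : ℕ) (y : ℕ → (ℕ →₀ ℝ))
    (hsupp : ∀ i, (y i).support.Nonempty)
    (hblock : ∀ i j, i < j → ∀ a ∈ (y i).support, ∀ b ∈ (y j).support, a < b)
    (hnorm1 : ∀ i, N m (y i) = 1)
    (hc0 : ∀ F : Finset ℕ, N m (∑ i ∈ F, y i) ≤ 2) :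
    ∀ n k : ℕ, 1 ≤ n → (∀ j ∈ (y (k + 1)).support, n ≤ j) →
      θ 1 * n ≤ N (m + 1) (∑ i ∈ Finset.Ico (k + 1) (k + n + 1), y i) ∧
      N m (∑ i ∈ Finset.Ico (k + 1) (k + n + 1), y i) ≤ 2 := by
  obtain ⟨hrec0, hrecS⟩ := hrec
  intro n k hn hk
  set s : Finset ℕ := Finset.Ico (k + 1) (k + n + 1) with hs
  refine ⟨?_, hc0 s⟩
  have hmin : ∀ j ∈ s, ∀ a ∈ (y j).support, n ≤ a := by
    intro j hj a ha
    rcases eq_or_lt_of_le (Finset.mem_Ico.mp hj).1 with h | h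
    · exact hk a (h ▸ ha)
    · obtain ⟨b, hb⟩ := hsupp (k + 1)
      exact le_of_lt (lt_of_le_of_lt (hk b hb) (hblock _ _ h b hb a ha))
  set x : ℕ →₀ ℝ := ∑ i ∈ s, y i with hx
  set E : Fin n → Finset ℕ := fun i => (y (k + 1 + (i : ℕ))).support with hEdef
  have hdisj : ∀ i j : ℕ, i ≠ j → Disjoint (y i).support (y j).support := by
    intro i j hij
    rcases lt_or_gt_of_ne hij with h | h
    · rw [Finset.disjoint_left]
      intro a ha hb
      exact absurd (hblock i j h a ha a hb) (lt_irrefl a)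
    · rw [Finset.disjoint_right]
      intro a ha hb
      exact absurd (hblock j i h a ha a hb) (lt_irrefl a)
  have hmem : ∀ i : Fin n, k + 1 + (i : ℕ) ∈ s := by
    intro i
    have := i.isLt
    simp only [hs, Finset.mem_Ico]
    omega
  have hE : AllowableSets 1 E := by
    refine ⟨fun i => hsupp _, ?_, ?_⟩
    · intro i j hij
      apply hdisj
      intro h
      exact hij (Fin.ext (by omega))
    · apply schreier_one
      intro a ha
      simp only [Finset.mem_image, Finset.mem_univ, true_and] at ha
      obtain ⟨i, hi⟩ := ha
      have hne : (E i).Nonempty := hsupp _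
      rw [← Finset.coe_min' hne] at hi
      have ha' : a ∈ E i := hi ▸ Finset.min'_mem (E i) hne
      calc (Finset.image (fun i => ((E i).min.getD 0)) Finset.univ).card
          ≤ (Finset.univ : Finset (Fin n)).card := Finset.card_image_le
        _ = n := by simp
        _ ≤ a := hmin _ (hmem i) a ha'
  have hfil : ∀ i : Fin n, x.filter (· ∈ E i) = y (k + 1 + (i : ℕ)) := by
    intro i
    ext a
    rw [Finsupp.filter_apply]
    by_cases ha : a ∈ E i
    · rw [if_pos ha, hx, Finsupp.finset_sum_apply]
      apply Finset.sum_eq_single (k + 1 + (i : ℕ))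
      · intro j hj hne
        by_contra h
        have hmem' : a ∈ (y j).support := Finsupp.mem_support_iff.mpr h
        exact (Finset.disjoint_left.mp (hdisj _ _ hne) hmem') ha
      · intro h
        exact absurd (hmem i) h
    · rw [if_neg ha]
      exact (Finsupp.notMem_support_iff.mp ha).symm
  have hsum : ∑ i : Fin n, N m (x.filter (· ∈ E i)) = n := by
    have h1 : ∀ i : Fin n, N m (x.filter (· ∈ E i)) = 1 := by
      intro i
      rw [hfil i]
      exact hnorm1 _
    simp [h1]
  have hmemS : θ 1 * (n : ℝ) ∈ ({⨆ j, |x j|} ∪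
      {z : ℝ | ∃ k, 1 ≤ k ∧ ∃ r, ∃ E : Fin r → Finset ℕ, AllowableSets k E ∧
        z = θ k * ∑ i, N m (x.filter (· ∈ E i))}) := by
    refine Set.mem_union_right _ ⟨1, le_refl 1, n, E, hE, ?_⟩
    rw [hsum]
  exact (hrecS m x).1 hmemS
end

section
/- Let X be the completion of c00 with norm ‖x‖_X = (Σ_{m=1}^∞ α_m ‖x²‖_{V,m})^{1/2} (the 2-convexification of V'). Then for every n ∈ ℕ, every I ∈ S_n with |I| ≥ 1, every choice of indices (k_i)_{i∈I} with n ≤ k_i and k_i pairwise distinct, and every (x_i)_{i∈I} ⊂ (0,1) with Σ_{i∈I} x_i² = 1, one has ‖Σ_{i∈I} x_i e_{k_i}‖_X ≥ √θ_n, provided that the supports {k_i} form an S_n-allowable family. -/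
/-- Coordinatewise square. -/
noncomputable def fsq (x : ℕ →₀ ℝ) : ℕ →₀ ℝ :=
  Finsupp.mapRange (fun t => t ^ 2) (by norm_num) x

noncomputable def L1aux (x : ℕ →₀ ℝ) : ℝ := ∑ j ∈ x.support, |x j|

lemma abs_le_L1aux (x : ℕ →₀ ℝ) (a : ℕ) : |x a| ≤ L1aux x := by
  by_cases h : a ∈ x.support
  · exact Finset.single_le_sum (f := fun j => |x j|) (fun j _ => abs_nonneg _) h
  · rw [Finsupp.notMem_support_iff.mp h]
    simpa [L1aux] using Finset.sum_nonneg fun j (_ : j ∈ x.support) => abs_nonneg (x j)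

lemma bddaux (x : ℕ →₀ ℝ) : BddAbove (Set.range fun j => |x j|) :=
  ⟨L1aux x, by rintro y ⟨j, rfl⟩; exact abs_le_L1aux x j⟩

lemma abs_le_supaux (x : ℕ →₀ ℝ) (a : ℕ) : |x a| ≤ ⨆ j, |x j| :=
  le_ciSup (bddaux x) a

lemma sup_le_L1aux (x : ℕ →₀ ℝ) : (⨆ j, |x j|) ≤ L1aux x :=
  ciSup_le fun j => abs_le_L1aux x j

lemma sup_nonneg_aux (x : ℕ →₀ ℝ) : 0 ≤ ⨆ j, |x j| :=
  le_trans (abs_nonneg _) (abs_le_supaux x 0)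

lemma sup_le_N {θ : ℕ → ℝ} {N : ℕ → (ℕ →₀ ℝ) → ℝ} (hrec : VNormRec θ N)
    (m : ℕ) (x : ℕ →₀ ℝ) : (⨆ j, |x j|) ≤ N m x := by
  cases m with
  | zero => rw [hrec.1]
  | succ m => exact (hrec.2 m x).1 (Or.inl rfl)

lemma N_nonneg {θ : ℕ → ℝ} {N : ℕ → (ℕ →₀ ℝ) → ℝ} (hrec : VNormRec θ N)
    (m : ℕ) (x : ℕ →₀ ℝ) : 0 ≤ N m x :=
  le_trans (sup_nonneg_aux x) (sup_le_N hrec m x)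

lemma L1_filter_sum_le {r : ℕ} (x : ℕ →₀ ℝ) (E : Fin r → Finset ℕ)
    (hdisj : ∀ i j, i ≠ j → Disjoint (E i) (E j)) :
    ∑ i, L1aux (x.filter (· ∈ E i)) ≤ L1aux x := by
  have hfil : ∀ i, L1aux (x.filter (· ∈ E i))
      = ∑ j ∈ x.support.filter (· ∈ E i), |x j| := by
    intro i
    rw [L1aux, Finsupp.support_filter]
    refine Finset.sum_congr rfl fun j hj => ?_
    rw [Finsupp.filter_apply, if_pos (Finset.mem_filter.mp hj).2]
  simp_rw [hfil]
  rw [← Finset.sum_biUnion]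
  · refine Finset.sum_le_sum_of_subset_of_nonneg ?_ (fun j _ _ => abs_nonneg _)
    intro j hj
    obtain ⟨i, _, hji⟩ := Finset.mem_biUnion.mp hj
    exact (Finset.mem_filter.mp hji).1
  · intro i _ j _ hij
    rw [Function.onFun, Finset.disjoint_left]
    intro a ha hb
    exact Finset.disjoint_left.mp (hdisj i j hij) (Finset.mem_filter.mp ha).2
      (Finset.mem_filter.mp hb).2

lemma N_le_L1 {θ : ℕ → ℝ} {N : ℕ → (ℕ →₀ ℝ) → ℝ} (hθ : ∀ n, θ n ∈ Set.Ioo (0:ℝ) 1)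
    (hrec : VNormRec θ N) (m : ℕ) (x : ℕ →₀ ℝ) : N m x ≤ L1aux x := by
  induction m generalizing x with
  | zero => rw [hrec.1]; exact sup_le_L1aux x
  | succ m ih =>
    refine (hrec.2 m x).2 ?_
    rintro y (rfl | ⟨kk, hk1, r, E, hE, rfl⟩)
    · exact sup_le_L1aux x
    · have hsumnn : (0:ℝ) ≤ ∑ i, N m (x.filter (· ∈ E i)) :=
        Finset.sum_nonneg fun i _ => N_nonneg hrec m _
      calc θ kk * ∑ i, N m (x.filter (· ∈ E i))
          ≤ 1 * ∑ i, N m (x.filter (· ∈ E i)) :=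
            mul_le_mul_of_nonneg_right (le_of_lt (hθ kk).2) hsumnn
        _ = ∑ i, N m (x.filter (· ∈ E i)) := one_mul _
        _ ≤ ∑ i, L1aux (x.filter (· ∈ E i)) :=
            Finset.sum_le_sum fun i _ => ih _
        _ ≤ L1aux x := L1_filter_sum_le x E hE.2.1

/-- Lower estimate in the 2-convexification of `V'` for `S_n`-allowable
normalized combinations of basis vectors. -/
theorem two_conv_VPrime_lower_estimate
    (θ : ℕ → ℝ) (hθ : ∀ n, θ n ∈ Set.Ioo (0:ℝ) 1)
    (hθ0 : Filter.Tendsto θ Filter.atTop (nhds 0))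
    (N : ℕ → (ℕ →₀ ℝ) → ℝ) (hrec : VNormRec θ N)
    (α : ℕ → ℝ) (hα : ∀ m, 0 < α m)
    (hsum : ∑' m : ℕ, α (m + 1) = 1)
    (Xnorm : (ℕ →₀ ℝ) → ℝ)
    (hX : ∀ x, Xnorm x = Real.sqrt (∑' m : ℕ, α (m + 1) * N (m + 1) (fsq x))) :
    ∀ n : ℕ, 1 ≤ n → ∀ I : Finset ℕ, I.Nonempty → Schreier n I →
      ∀ k : ℕ → ℕ, Set.InjOn k I → (∀ i ∈ I, n ≤ k i) →
        Schreier n (I.image k) →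
        ∀ x : ℕ → ℝ, (∀ i ∈ I, x i ∈ Set.Ioo (0:ℝ) 1) →
          (∑ i ∈ I, (x i) ^ 2 = 1) →
          Real.sqrt (θ n) ≤ Xnorm (∑ i ∈ I, x i • Finsupp.single (k i) 1) := by
  intro n hn I hI hSI k hkinj hkge hSim x hx hxsum
  set y : ℕ →₀ ℝ := ∑ i ∈ I, x i • Finsupp.single (k i) 1 with hy
  have hyval : ∀ i₀ ∈ I, y (k i₀) = x i₀ := by
    intro i₀ hi₀
    rw [hy, Finsupp.finset_sum_apply]
    rw [Finset.sum_eq_single i₀]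
    · simp
    · intro i hi hne
      have : k i ≠ k i₀ := fun h => hne (hkinj hi hi₀ h)
      simp [Finsupp.single_apply, this]
    · intro h; exact absurd hi₀ h
  have hfval : ∀ i₀ ∈ I, fsq y (k i₀) = (x i₀)^2 := by
    intro i₀ hi₀
    rw [fsq, Finsupp.mapRange_apply, hyval i₀ hi₀]
  set r := I.card with hr
  let e := I.orderIsoOfFin rfl
  let E : Fin r → Finset ℕ := fun i => {k (e i)}
  have heI : ∀ i : Fin r, (e i : ℕ) ∈ I := fun i => (e i).2
  have hEalw : AllowableSets n E := by
    refine ⟨fun i => Finset.singleton_nonempty _, ?_, ?_⟩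
    · intro i j hij
      simp only [E, Finset.disjoint_singleton]
      intro h
      exact hij (e.injective (Subtype.ext (hkinj (heI i) (heI j) h)))
    · have : Finset.image (fun i => ((E i).min.getD 0)) Finset.univ = I.image k := by
        ext b
        simp only [Finset.mem_image, Finset.mem_univ, true_and, E,
          Finset.min_singleton, Option.getD_some]
        constructor
        · rintro ⟨i, rfl⟩; exact ⟨e i, heI i, rfl⟩
        · rintro ⟨a, ha, rfl⟩
          refine ⟨e.symm ⟨a, ha⟩, ?_⟩
          simp only [OrderIso.apply_symm_apply]
          rfl
      rw [this]; exact hSim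
  have hsum1 : ∀ m : ℕ, (1:ℝ) ≤ ∑ i, N m ((fsq y).filter (· ∈ E i)) := by
    intro m
    have hterm : ∀ i : Fin r, (x (e i))^2 ≤ N m ((fsq y).filter (· ∈ E i)) := by
      intro i
      have h1 : ((fsq y).filter (· ∈ E i)) (k (e i)) = (x (e i))^2 := by
        rw [Finsupp.filter_apply, if_pos (Finset.mem_singleton_self _)]
        exact hfval _ (heI i)
      calc (x (e i))^2 = |((fsq y).filter (· ∈ E i)) (k (e i))| := by
            rw [h1, abs_of_nonneg (sq_nonneg _)]
        _ ≤ ⨆ j, |((fsq y).filter (· ∈ E i)) j| := abs_le_supaux _ _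
        _ ≤ N m _ := sup_le_N hrec m _
    calc (1:ℝ) = ∑ i ∈ I, (x i)^2 := hxsum.symm
      _ = ∑ i : Fin r, (x (e i))^2 := by
          rw [← Finset.sum_coe_sort I (fun a => (x a)^2)]
          exact (Fintype.sum_equiv e.toEquiv _ _ (fun i => rfl)).symm
      _ ≤ _ := Finset.sum_le_sum fun i _ => hterm i
  have key : ∀ m : ℕ, θ n ≤ N (m+1) (fsq y) := by
    intro m
    have hmem : θ n * ∑ i, N m ((fsq y).filter (· ∈ E i)) ≤ N (m+1) (fsq y) :=
      (hrec.2 m (fsq y)).1 (Or.inr ⟨n, hn, r, E, hEalw, rfl⟩)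
    refine le_trans ?_ hmem
    exact le_mul_of_one_le_right (le_of_lt (hθ n).1) (hsum1 m)
  -- summability
  have hαs : Summable (fun m => α (m+1)) := by
    by_contra h
    rw [tsum_eq_zero_of_not_summable h] at hsum
    norm_num at hsum
  set C := L1aux (fsq y) with hC
  have hfs : Summable (fun m => α (m+1) * N (m+1) (fsq y)) := by
    refine Summable.of_nonneg_of_le
      (fun m => mul_nonneg (le_of_lt (hα _)) (N_nonneg hrec _ _))
      (fun m => mul_le_mul_of_nonneg_left (N_le_L1 hθ hrec _ _) (le_of_lt (hα _)))
      (hαs.mul_right C)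
  have hts : θ n ≤ ∑' m : ℕ, α (m+1) * N (m+1) (fsq y) := by
    have h1 : ∑' m : ℕ, θ n * α (m+1) = θ n := by
      rw [tsum_mul_left, hsum, mul_one]
    rw [← h1]
    refine Summable.tsum_le_tsum (fun m => ?_) (hαs.mul_left _) hfs
    rw [mul_comm (θ n)]
    exact mul_le_mul_of_nonneg_left (key m) (le_of_lt (hα _))
  rw [hX]
  exact Real.sqrt_le_sqrt hts
end
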